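/- The gradient of g(h) = (tr h²)³ − 6(tr h³)² on the space of traceless symmetric 3×3 matrices, which equals 6((tr h²)²·h − 6(tr h³)·(h²)'), vanishes at every h with g(h) = 0. -/
import Mathlib

open Matrix

/-- Scalar version of the statement for the eigenvalues. -/
lemma key_scalar (a b c : ℝ) (h1 : a + b + c = 0)
    (h2 : (a^2 + b^2 + c^2)^3 - 6*(a^3 + b^3 + c^3)^2 = 0) :
    (a^2 + b^2 + c^2)^2 * a - 6*(a^3 + b^3 + c^3)*(a^2 - (a^2 + b^2 + c^2)/3) = 0 := by
  have hsq : ((a - b)*(2*a + b)*(a + 2*b))^2 = 0 := by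
    linear_combination h2/2 - ((-13*a^5 - 11*a^4*b + 13*a^4*c + 20*a^3*b^2 - 2*a^3*b*c
      - 10*a^3*c^2 + 20*a^2*b^3 - 18*a^2*b^2*c + 12*a^2*b*c^2 - 2*a^2*c^3 - 11*a*b^4
      - 2*a*b^3*c + 12*a*b^2*c^2 - 10*a*b*c^3 + 5*a*c^4 - 13*b^5 + 13*b^4*c - 10*b^3*c^2
      - 2*b^2*c^3 + 5*b*c^4 - 5*c^5)/2) * h1
  have hD : (a - b)*(2*a + b)*(a + 2*b) = 0 := by
    exact pow_eq_zero_iff two_ne_zero |>.mp hsq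
  linear_combination (2*a^2 + 4*a*b) * hD + (-7*a^4 - 7*a^3*b + 7*a^3*c + 5*a^2*b^2
    - 3*a^2*c^2 + 7*a*b^3 - 5*a*b^2*c + 3*a*b*c^2 - a*c^3 + 2*b^4 - 2*b^3*c + 4*b^2*c^2
    - 2*b*c^3 + 2*c^4) * h1

/-- The gradient `6((tr h²)²·h − 6(tr h³)·(h²)')` of
`g(h) = (tr h²)³ − 6(tr h³)²` on traceless symmetric 3×3 matrices vanishes at
every `h` with `g(h) = 0`. -/
theorem gradient_vanishes_on_zero_set
    (h : Matrix (Fin 3) (Fin 3) ℝ) (hsym : h.IsSymm) (htr : h.trace = 0)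
    (hg : ((h ^ 2).trace) ^ 3 - 6 * ((h ^ 3).trace) ^ 2 = 0) :
    (6 : ℝ) • (((h ^ 2).trace) ^ 2 • h -
      (6 * (h ^ 3).trace) •
        (h ^ 2 - ((h ^ 2).trace / 3) • (1 : Matrix (Fin 3) (Fin 3) ℝ)))
      = 0 := by
  have hherm : h.IsHermitian := by
    rwa [Matrix.IsHermitian, Matrix.conjTranspose_eq_transpose_of_trivial]
  set U : Matrix (Fin 3) (Fin 3) ℝ := (hherm.eigenvectorUnitary : Matrix (Fin 3) (Fin 3) ℝ) with hUdef
  set d : Fin 3 → ℝ := hherm.eigenvalues with hddef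
  have hUU : star U * U = 1 :=
    Matrix.mem_unitaryGroup_iff'.mp hherm.eigenvectorUnitary.2
  have hUUs : U * star U = 1 :=
    Matrix.mem_unitaryGroup_iff.mp hherm.eigenvectorUnitary.2
  have hspec : h = U * Matrix.diagonal d * star U := by
    have := hherm.spectral_theorem
    rwa [RCLike.ofReal_real_eq_id, Function.id_comp] at this
  have conjmul : ∀ f g : Fin 3 → ℝ,
      (U * Matrix.diagonal f * star U) * (U * Matrix.diagonal g * star U)
        = U * Matrix.diagonal (fun i => f i * g i) * star U := by
    intro f g
    have hcancel : ∀ X : Matrix (Fin 3) (Fin 3) ℝ, star U * (U * X) = X := fun X => by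
      rw [← Matrix.mul_assoc, hUU, one_mul]
    simp only [Matrix.mul_assoc, hcancel]
    rw [← Matrix.mul_assoc (Matrix.diagonal f), Matrix.diagonal_mul_diagonal]
  have h2eq : h ^ 2 = U * Matrix.diagonal (fun i => d i ^ 2) * star U := by
    rw [pow_two, hspec, conjmul]
    have : (fun i => d i * d i) = fun i => d i ^ 2 := by funext i; ring
    rw [this]
  have h3eq : h ^ 3 = U * Matrix.diagonal (fun i => d i ^ 3) * star U := by
    rw [pow_succ, h2eq, hspec, conjmul]
    have : (fun i => d i ^ 2 * d i) = fun i => d i ^ 3 := by funext i; ring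
    rw [this]
  have trconj : ∀ f : Fin 3 → ℝ,
      (U * Matrix.diagonal f * star U).trace = f 0 + f 1 + f 2 := by
    intro f
    rw [Matrix.trace_mul_cycle, hUU, one_mul, Matrix.trace_diagonal, Fin.sum_univ_three]
  have hs1 : d 0 + d 1 + d 2 = 0 := by
    rw [hspec, trconj] at htr; exact htr
  have ht2 : (h ^ 2).trace = d 0 ^ 2 + d 1 ^ 2 + d 2 ^ 2 := by
    rw [h2eq, trconj]
  have ht3 : (h ^ 3).trace = d 0 ^ 3 + d 1 ^ 3 + d 2 ^ 3 := by
    rw [h3eq, trconj]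
  set t2 : ℝ := (h ^ 2).trace with ht2def
  set t3 : ℝ := (h ^ 3).trace with ht3def
  have hone : (1 : Matrix (Fin 3) (Fin 3) ℝ)
      = U * 1 * star U := by
    rw [mul_one, hUUs]
  have hg' : (d 0 ^ 2 + d 1 ^ 2 + d 2 ^ 2)^3 - 6*(d 0 ^ 3 + d 1 ^ 3 + d 2 ^ 3)^2 = 0 := by
    rw [← ht2, ← ht3]
    linarith [hg]
  -- the inner diagonal matrix vanishes
  have hdiag : Matrix.diagonal
      (fun i => (6 : ℝ) * (t2 ^ 2 * d i - 6 * t3 * (d i ^ 2 - t2 / 3))) = 0 := by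
    have hz : ∀ i, (6 : ℝ) * (t2 ^ 2 * d i - 6 * t3 * (d i ^ 2 - t2 / 3)) = 0 := by
      intro i
      fin_cases i
      · show (6 : ℝ) * (t2 ^ 2 * d 0 - 6 * t3 * (d 0 ^ 2 - t2 / 3)) = 0
        have := key_scalar (d 0) (d 1) (d 2) hs1 hg'
        rw [ht2, ht3]; linear_combination 6 * this
      · show (6 : ℝ) * (t2 ^ 2 * d 1 - 6 * t3 * (d 1 ^ 2 - t2 / 3)) = 0
        have := key_scalar (d 1) (d 0) (d 2) (by linarith) (by linear_combination hg')
        rw [ht2, ht3]; linear_combination 6 * this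
      · show (6 : ℝ) * (t2 ^ 2 * d 2 - 6 * t3 * (d 2 ^ 2 - t2 / 3)) = 0
        have := key_scalar (d 2) (d 0) (d 1) (by linarith) (by linear_combination hg')
        rw [ht2, ht3]; linear_combination 6 * this
    ext i j
    by_cases hij : i = j
    · subst hij
      simp [Matrix.diagonal_apply_eq, hz i]
    · simp [Matrix.diagonal_apply_ne _ hij]
  have hsplit : (Matrix.diagonal fun i => (6 : ℝ) * (t2 ^ 2 * d i - 6 * t3 * (d i ^ 2 - t2 / 3)))
      = (6 : ℝ) • (t2 ^ 2 • Matrix.diagonal d - (6 * t3) •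
          (Matrix.diagonal (fun i => d i ^ 2) - (t2 / 3) • (1 : Matrix (Fin 3) (Fin 3) ℝ))) := by
    ext i j
    by_cases hij : i = j
    · subst hij
      simp [Matrix.diagonal_apply_eq, Matrix.one_apply_eq]
    · simp [Matrix.diagonal_apply_ne _ hij, Matrix.one_apply_ne hij]
  -- assemble
  calc (6 : ℝ) • (t2 ^ 2 • h - (6 * t3) • (h ^ 2 - (t2 / 3) • (1 : Matrix (Fin 3) (Fin 3) ℝ)))
      = U * Matrix.diagonal
          (fun i => (6 : ℝ) * (t2 ^ 2 * d i - 6 * t3 * (d i ^ 2 - t2 / 3))) * star U := by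
        rw [h2eq, hspec, hone, hsplit]
        simp only [Matrix.mul_sub, Matrix.sub_mul, Matrix.mul_smul, Matrix.smul_mul,
          Matrix.mul_assoc]
    _ = U * 0 * star U := by rw [hdiag]
    _ = 0 := by simp
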